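/- Vertex separability implies edge separability for (d, ℓ)-hypergraphs: let G be a binom(d, ℓ)-partite uniform hypergraph with parts V_I indexed by ℓ-element subsets I of [d]. If for every part V_I and every two distinct v, v' ∈ V_I there exists j ∈ [d] \ I such that every v–v' path contains a vertex in some part V_J with j ∈ J, then for every two distinct hyperedges e, e' there exists j ∈ [d] such that every e–e' path contains a vertex in some part V_J with j ∈ J. -/

import Mathlib

/-- A `binom(d,ℓ)`-partite uniform hypergraph: parts indexed by the `ℓ`-element subsets
of `[d]`, each hyperedge containing exactly one vertex of each part. -/
structure DLHypergraph (d l : ℕ) (V E : Type) where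
  part : V → {I : Finset (Fin d) // I.card = l}
  vert : E → {I : Finset (Fin d) // I.card = l} → V
  hpart : ∀ e I, part (vert e I) = I

namespace DLHypergraph

variable {d l : ℕ} {V E : Type}

/-- Vertex `v` belongs to hyperedge `e`. -/
def Mem (G : DLHypergraph d l V E) (v : V) (e : E) : Prop :=
  G.vert e (G.part v) = v

/-- Two vertices are adjacent if they are both contained in a common hyperedge. -/
def Adj (G : DLHypergraph d l V E) (u v : V) : Prop :=
  ∃ e : E, G.Mem u e ∧ G.Mem v e

/-- `l` is an `s`–`t` path. -/
def IsPath (G : DLHypergraph d l V E) (s t : V) (L : List V) : Prop :=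
  L.Chain' G.Adj ∧ L.head? = some s ∧ L.getLast? = some t

/-- Vertex separability: for distinct `v, v'` in the same part `V_I` there is a
coordinate `j ∉ I` such that every `v`–`v'` path contains a vertex in some part `V_J`
with `j ∈ J`. -/
def VertexSeparable (G : DLHypergraph d l V E) : Prop :=
  ∀ v v' : V, v ≠ v' → G.part v = G.part v' →
    ∃ j : Fin d, j ∉ (G.part v).val ∧
      ∀ L : List V, G.IsPath v v' L → ∃ w ∈ L, j ∈ (G.part w).val

/-- Edge separability: for distinct hyperedges `e, e'` there is a coordinate `j` such
that every `e`–`e'` path contains a vertex in some part `V_J` with `j ∈ J`. -/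
def EdgeSeparable (G : DLHypergraph d l V E) : Prop :=
  ∀ e e' : E, G.vert e ≠ G.vert e' →
    ∃ j : Fin d, ∀ (v v' : V) (L : List V), G.Mem v e → G.Mem v' e' →
      G.IsPath v v' L → ∃ w ∈ L, j ∈ (G.part w).val

/-- The axis-aligned affine `ℓ`-subspace of `ℝ^d` representing vertex `v`: coordinates
in the free set `G.part v` are free, all other coordinates are fixed to values of `C v`. -/
def subspaceOf (G : DLHypergraph d l V E) (C : V → Fin d → ℝ) (v : V) : Set (Fin d → ℝ) :=
  {x | ∀ j : Fin d, j ∉ (G.part v).val → x j = C v j}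

/-- `(p, C)` is a point subspace cover representation of `G` in `ℝ^d`: hyperedges map
to pairwise distinct points, vertices to pairwise distinct axis-aligned `ℓ`-subspaces
(part `V_I` to subspaces with free coordinate set `I`), preserving and reflecting
incidence. -/
def Represents (G : DLHypergraph d l V E) (p : E → Fin d → ℝ) (C : V → Fin d → ℝ) : Prop :=
  Function.Injective p ∧
  (∀ v v' : V, v ≠ v' → G.subspaceOf C v ≠ G.subspaceOf C v') ∧
  (∀ (v : V) (e : E), G.Mem v e ↔ p e ∈ G.subspaceOf C v)

end DLHypergraph

/-- For `(d,ℓ)`-hypergraphs with `ℓ ≤ d − 1`, vertex separability implies edge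
separability. -/
theorem stmt10 {d l : ℕ} {V E : Type} (hl : l ≤ d - 1)
    (G : DLHypergraph d l V E) (h : G.VertexSeparable) : G.EdgeSeparable := by
  intro e e' hne
  obtain ⟨I, hI⟩ := Function.ne_iff.mp hne
  set v := G.vert e I with hv
  set v' := G.vert e' I with hv'
  have hpv : G.part v = I := G.hpart e I
  have hpv' : G.part v' = I := G.hpart e' I
  obtain ⟨j, hjI, hsep⟩ := h v v' hI (by rw [hpv, hpv'])
  refine ⟨j, ?_⟩
  rintro u u' L hu hu' ⟨hc, hh, hl⟩
  have hLne : L ≠ [] := by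
    intro hL; rw [hL] at hh; simp at hh
  have hMemv : G.Mem v e := by
    show G.vert e (G.part v) = v
    rw [hpv]
  have hMemv' : G.Mem v' e' := by
    show G.vert e' (G.part v') = v'
    rw [hpv']
  have hchain : List.Chain' G.Adj (v :: (L ++ [v'])) := by
    rw [show v :: (L ++ [v']) = (v :: L) ++ [v'] by simp]
    unfold List.Chain'
    rw [List.isChain_append]
    refine ⟨?_, List.isChain_singleton _, ?_⟩
    · rw [List.isChain_cons]
      refine ⟨?_, hc⟩
      intro y hy
      rw [hh] at hy
      cases hy
      exact ⟨e, hMemv, hu⟩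
    · intro x hx y hy
      simp only [List.head?_cons, Option.mem_def, Option.some.injEq] at hy
      subst hy
      have hvc : (v :: L).getLast? = L.getLast? := by
        rcases List.exists_cons_of_ne_nil hLne with ⟨a, t, rfl⟩
        exact List.getLast?_cons_cons ..
      rw [Option.mem_def, hvc, hl, Option.some.injEq] at hx
      subst hx
      exact ⟨e', hu', hMemv'⟩
  have hpath : G.IsPath v v' (v :: (L ++ [v'])) := by
    refine ⟨hchain, rfl, ?_⟩
    rw [show v :: (L ++ [v']) = (v :: L) ++ [v'] by simp]
    exact List.getLast?_concat
  obtain ⟨w, hw, hjw⟩ := hsep _ hpath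
  rcases List.mem_cons.mp hw with rfl | hw
  · exact absurd hjw hjI
  rcases List.mem_append.mp hw with hw | hw
  · exact ⟨w, hw, hjw⟩
  · simp only [List.mem_singleton] at hw
    subst hw
    rw [hpv'] at hjw
    rw [hpv] at hjI
    exact absurd hjw hjI
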